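/- Let (M, g, ∇) be a statistical manifold and S the (1,1)-tensor defined by Ric(X,Y) = (n−1) g(SX, Y). Assume Ric is symmetric and ∇Ric is totally symmetric. If there is a smooth function λ on M with SY = λY for all vector fields Y, then λ is constant. -/

import Mathlib

open scoped BigOperators

namespace StatMfd

/-- Vector fields on an "abstract manifold": derivations of the algebra `A`
of smooth functions. -/
abbrev VF (A : Type*) [CommRing A] [Algebra ℝ A] := Derivation ℝ A A

variable {A : Type*} [CommRing A] [Algebra ℝ A]

/-- An affine connection on vector fields. -/
structure Conn (A : Type*) [CommRing A] [Algebra ℝ A] where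
  D : VF A → VF A → VF A
  add_left : ∀ X Y Z, D (X + Y) Z = D X Z + D Y Z
  smul_left : ∀ (f : A) (X Y), D (f • X) Y = f • D X Y
  add_right : ∀ X Y Z, D X (Y + Z) = D X Y + D X Z
  leibniz : ∀ (f : A) (X Y), D X (f • Y) = f • D X Y + (X f) • Y

/-- A pseudo-Riemannian metric: a symmetric nondegenerate `A`-bilinear form. -/
structure Metric (A : Type*) [CommRing A] [Algebra ℝ A] where
  g : VF A → VF A → A
  add_left : ∀ X Y Z, g (X + Y) Z = g X Z + g Y Z
  smul_left : ∀ (f : A) (X Y), g (f • X) Y = f * g X Y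
  symm : ∀ X Y, g X Y = g Y X
  nondeg : ∀ X, (∀ Y, g X Y = 0) → X = 0

/-- The connection `∇` is torsion free. -/
def TorsionFree (C : Conn A) : Prop := ∀ X Y, C.D X Y - C.D Y X = ⁅X, Y⁆

/-- The cubic form `C(X,Y,Z) = (∇_X g)(Y,Z)`. -/
def cubic (gm : Metric A) (C : Conn A) (X Y Z : VF A) : A :=
  X (gm.g Y Z) - gm.g (C.D X Y) Z - gm.g Y (C.D X Z)

/-- Total symmetry of a `(0,3)`-tensor (valued in `A` or in vector fields). -/
def TotSym3 {B : Type*} (T : VF A → VF A → VF A → B) : Prop :=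
  (∀ X Y Z, T X Y Z = T Y X Z) ∧ (∀ X Y Z, T X Y Z = T X Z Y)

/-- Total symmetry of a `(0,4)`-tensor. -/
def TotSym4 (T : VF A → VF A → VF A → VF A → A) : Prop :=
  (∀ X Y Z W, T X Y Z W = T Y X Z W) ∧ (∀ X Y Z W, T X Y Z W = T X Z Y W) ∧
    (∀ X Y Z W, T X Y Z W = T X Y W Z)

/-- `(g, ∇)` is a statistical structure. -/
def IsStatistical (gm : Metric A) (C : Conn A) : Prop :=
  TorsionFree C ∧ TotSym3 (cubic gm C)

/-- `∇*` is the dual connection of `∇` with respect to `g`. -/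
def IsDual (gm : Metric A) (C Cs : Conn A) : Prop :=
  ∀ X Y Z, X (gm.g Y Z) = gm.g (C.D X Y) Z + gm.g Y (Cs.D X Z)

/-- `h` is the Levi-Civita connection of `g`. -/
def IsLeviCivita (gm : Metric A) (h : Conn A) : Prop :=
  TorsionFree h ∧ ∀ X Y Z, X (gm.g Y Z) = gm.g (h.D X Y) Z + gm.g Y (h.D X Z)

/-- The difference tensor `K(X,Y) = ∇_X Y − ∇̂_X Y`. -/
def Kdiff (C h : Conn A) (X Y : VF A) : VF A := C.D X Y - h.D X Y

/-- The curvature tensor of a connection. -/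
def curv (C : Conn A) (X Y Z : VF A) : VF A :=
  C.D X (C.D Y Z) - C.D Y (C.D X Z) - C.D ⁅X, Y⁆ Z

/-- `(∇_X K)(Y,Z)` for a `(1,2)`-tensor `K`. -/
def covK (C : Conn A) (K : VF A → VF A → VF A) (X Y Z : VF A) : VF A :=
  C.D X (K Y Z) - K (C.D X Y) Z - K Y (C.D X Z)

/-- `(∇_X T)(Y,Z,W)` for a `(0,3)`-tensor `T`. -/
def covC (C : Conn A) (T : VF A → VF A → VF A → A) (X Y Z W : VF A) : A :=
  X (T Y Z W) - T (C.D X Y) Z W - T Y (C.D X Z) W - T Y Z (C.D X W)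

/-- `(∇_X T)(Y,Z)` for a `(0,2)`-tensor `T`. -/
def cov2 (C : Conn A) (T : VF A → VF A → A) (X Y Z : VF A) : A :=
  X (T Y Z) - T (C.D X Y) Z - T Y (C.D X Z)

/-- `(∇_X R)(Y,Z)W` for the curvature tensor of a connection. -/
def covR (C : Conn A) (X Y Z W : VF A) : VF A :=
  C.D X (curv C Y Z W) - curv C (C.D X Y) Z W - curv C Y (C.D X Z) W
    - curv C Y Z (C.D X W)

/-- A global frame of vector fields together with its dual coframe. -/
structure Frame (A : Type*) [CommRing A] [Algebra ℝ A] (n : ℕ) where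
  e : Fin n → VF A
  ε : Fin n → VF A → A
  ε_add : ∀ i X Y, ε i (X + Y) = ε i X + ε i Y
  ε_smul : ∀ i (f : A) X, ε i (f • X) = f * ε i X
  expand : ∀ X, X = ∑ i, ε i X • e i

/-- The Ricci curvature `Ric(Y,Z) = tr{X ↦ R(X,Y)Z}` computed in a frame. -/
def ricci {n : ℕ} (F : Frame A n) (C : Conn A) (Y Z : VF A) : A :=
  ∑ i, F.ε i (curv C (F.e i) Y Z)

/-- `τ_g(X) = tr K_X` computed in a frame. -/
def tau {n : ℕ} (F : Frame A n) (K : VF A → VF A → VF A) (X : VF A) : A :=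
  ∑ i, F.ε i (K X (F.e i))

/-- `(div^∇̂ K)(Y,Z)`, the trace of `V ↦ (∇̂_V K)(Y,Z)`, computed in a frame. -/
def divK {n : ℕ} (F : Frame A n) (h : Conn A) (K : VF A → VF A → VF A)
    (Y Z : VF A) : A :=
  ∑ i, F.ε i (covK h K (F.e i) Y Z)

/-- `(M,g,∇)` has constant curvature `k`. -/
def ConstCurv (gm : Metric A) (C : Conn A) (k : ℝ) : Prop :=
  ∀ X Y Z, curv C X Y Z = k • (gm.g Y Z • X - gm.g X Z • Y)

/-- Projective flatness of a connection, via Eisenhart's characterization: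
for `n = 2` total symmetry of `∇ Ric`, for `n ≥ 3` vanishing of the
projective curvature tensor. -/
def ProjFlat {n : ℕ} (F : Frame A n) (C : Conn A) : Prop :=
  (n = 2 ∧ TotSym3 (cov2 C (ricci F C))) ∨
    (3 ≤ n ∧ ∀ X Y Z, curv C X Y Z =
      ((n : ℝ) - 1)⁻¹ • (ricci F C Y Z • X - ricci F C X Z • Y))



/-! ### Auxiliary lemmas for statement 16 -/

section Stmt16Aux

lemma vf_smul_apply (a : A) (X : VF A) (b : A) : (a • X) b = a * X b := by
  rw [Derivation.smul_apply, smul_eq_mul]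

lemma vf_sum_apply {ι : Type*} (s : Finset ι) (V : ι → VF A) (b : A) :
    (∑ i ∈ s, V i) b = ∑ i ∈ s, V i b := by
  classical
  induction s using Finset.induction_on with
  | empty => simp
  | insert _ _ h ih =>
      rw [Finset.sum_insert h, Finset.sum_insert h, Derivation.add_apply, ih]

lemma brak_smul_left (a : A) (X Y : VF A) : ⁅a • X, Y⁆ = a • ⁅X, Y⁆ - (Y a) • X := by
  ext b
  simp only [Derivation.commutator_apply, Derivation.sub_apply, Derivation.smul_apply,
    smul_eq_mul, Derivation.leibniz]
  ring

lemma brak_smul_right (a : A) (X Y : VF A) : ⁅X, a • Y⁆ = a • ⁅X, Y⁆ + (X a) • Y := by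
  ext b
  simp only [Derivation.commutator_apply, Derivation.add_apply, Derivation.smul_apply,
    smul_eq_mul, Derivation.leibniz]
  ring

variable (C : Conn A)

lemma D_zero_left (Z : VF A) : C.D 0 Z = 0 := by
  have h := C.add_left 0 0 Z
  rw [add_zero] at h
  exact (add_eq_left.mp h.symm)

lemma D_zero_right (X : VF A) : C.D X 0 = 0 := by
  have h := C.add_right X 0 0
  rw [add_zero] at h
  exact (add_eq_left.mp h.symm)

lemma D_sub_left (X X' Z : VF A) : C.D (X - X') Z = C.D X Z - C.D X' Z := by
  have h2 : X' + (X - X') = X := by abel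
  have h := C.add_left X' (X - X') Z
  rw [h2] at h
  rw [h]; abel

lemma D_neg_left (X Z : VF A) : C.D (-X) Z = - C.D X Z := by
  have h := D_sub_left C 0 X Z
  rw [zero_sub, D_zero_left, zero_sub] at h
  exact h

lemma curv_add_left (X X' Y Z : VF A) :
    curv C (X + X') Y Z = curv C X Y Z + curv C X' Y Z := by
  unfold curv
  rw [C.add_left, add_lie, C.add_left, C.add_right, C.add_left]
  abel

lemma curv_add_mid (X Y Y' Z : VF A) :
    curv C X (Y + Y') Z = curv C X Y Z + curv C X Y' Z := by
  unfold curv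
  rw [C.add_left, lie_add, C.add_left, C.add_right, C.add_left]
  abel

lemma curv_smul_left (a : A) (X Y Z : VF A) :
    curv C (a • X) Y Z = a • curv C X Y Z := by
  unfold curv
  rw [C.smul_left, C.smul_left, C.leibniz, brak_smul_left, D_sub_left, C.smul_left, C.smul_left,
    smul_sub, smul_sub]
  abel

lemma curv_smul_mid (a : A) (X Y Z : VF A) :
    curv C X (a • Y) Z = a • curv C X Y Z := by
  unfold curv
  rw [C.smul_left, C.leibniz, C.smul_left, brak_smul_right, C.add_left, C.smul_left, C.smul_left,
    smul_sub, smul_sub]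
  abel

lemma curv_zero_left (Y Z : VF A) : curv C 0 Y Z = 0 := by
  simp [curv, D_zero_left, D_zero_right, zero_lie]

lemma curv_zero_mid (X Z : VF A) : curv C X 0 Z = 0 := by
  simp [curv, D_zero_left, D_zero_right, lie_zero]

lemma curv_skew (X Y Z : VF A) : curv C X Y Z = - curv C Y X Z := by
  have h : curv C X Y Z + curv C Y X Z = 0 := by
    unfold curv
    have hb : ⁅Y, X⁆ = -⁅X, Y⁆ := by rw [← lie_skew]
    rw [hb, D_neg_left]
    abel
  exact eq_neg_of_add_eq_zero_left h

lemma curv_sum_left {ι : Type*} (s : Finset ι) (v : ι → A) (w : ι → VF A) (Y Z : VF A) :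
    curv C (∑ i ∈ s, v i • w i) Y Z = ∑ i ∈ s, v i • curv C (w i) Y Z := by
  classical
  induction s using Finset.induction_on with
  | empty => simpa using curv_zero_left C Y Z
  | insert _ _ h ih =>
      rw [Finset.sum_insert h, curv_add_left, curv_smul_left, ih, Finset.sum_insert h]

lemma curv_sum_mid {ι : Type*} (s : Finset ι) (v : ι → A) (w : ι → VF A) (X Z : VF A) :
    curv C X (∑ i ∈ s, v i • w i) Z = ∑ i ∈ s, v i • curv C X (w i) Z := by
  classical
  induction s using Finset.induction_on with
  | empty => simpa using curv_zero_mid C X Z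
  | insert _ _ h ih =>
      rw [Finset.sum_insert h, curv_add_mid, curv_smul_mid, ih, Finset.sum_insert h]

variable (gm : Metric A)

lemma g_zero_left (Z : VF A) : gm.g 0 Z = 0 := by
  have h := gm.add_left 0 0 Z
  rw [add_zero] at h
  exact (add_eq_left.mp h.symm)

lemma g_sub_left (X X' Z : VF A) : gm.g (X - X') Z = gm.g X Z - gm.g X' Z := by
  have h2 : X' + (X - X') = X := by abel
  have h := gm.add_left X' (X - X') Z
  rw [h2] at h
  rw [h]; ring

lemma g_sumL {ι : Type*} (s : Finset ι) (v : ι → A) (w : ι → VF A) (Z : VF A) :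
    gm.g (∑ i ∈ s, v i • w i) Z = ∑ i ∈ s, v i * gm.g (w i) Z := by
  classical
  induction s using Finset.induction_on with
  | empty => simpa using g_zero_left gm Z
  | insert _ _ h ih =>
      rw [Finset.sum_insert h, gm.add_left, gm.smul_left, ih, Finset.sum_insert h]

lemma g_sumR {ι : Type*} (s : Finset ι) (v : ι → A) (w : ι → VF A) (Y : VF A) :
    gm.g Y (∑ i ∈ s, v i • w i) = ∑ i ∈ s, v i * gm.g Y (w i) := by
  rw [gm.symm, g_sumL]
  exact Finset.sum_congr rfl fun i _ => by rw [gm.symm]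

variable {nn : ℕ} (F : Frame A nn)

lemma eps_zero (i : Fin nn) : F.ε i 0 = 0 := by
  have h := F.ε_add i 0 0
  rw [add_zero] at h
  exact (add_eq_left.mp h.symm)

lemma eps_neg (i : Fin nn) (V : VF A) : F.ε i (-V) = - F.ε i V := by
  have h := F.ε_smul i (-1 : A) V
  rw [neg_one_smul] at h
  rw [h]; ring

lemma eps_sumS (i : Fin nn) {ι : Type*} (s : Finset ι) (v : ι → A) (w : ι → VF A) :
    F.ε i (∑ x ∈ s, v x • w x) = ∑ x ∈ s, v x * F.ε i (w x) := by
  classical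
  induction s using Finset.induction_on with
  | empty => simpa using eps_zero F i
  | insert _ _ h ih =>
      rw [Finset.sum_insert h, F.ε_add, F.ε_smul, ih, Finset.sum_insert h]

lemma g_expand (Y Z : VF A) :
    gm.g Y Z = ∑ j, ∑ k, F.ε j Y * (F.ε k Z * gm.g (F.e j) (F.e k)) := by
  conv_lhs => rw [F.expand Y, F.expand Z]
  rw [g_sumL]
  refine Finset.sum_congr rfl fun j _ => ?_
  rw [g_sumR, Finset.mul_sum]

/-- the matrix of the frame pairing -/
def Pmat : Fin nn → Fin nn → A := fun i j => F.ε i (F.e j)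

/-- 2×2 minors of the frame pairing matrix -/
def mnr (l m i j : Fin nn) : A :=
  Pmat F l i * Pmat F m j - Pmat F m i * Pmat F l j

/-- the ideal generated by all the 2×2 minors -/
def mnrIdeal : Ideal A :=
  Ideal.span (Set.range fun q : Fin nn × Fin nn × Fin nn × Fin nn =>
    mnr F q.1 q.2.1 q.2.2.1 q.2.2.2)

lemma mnr_mem (l m i j : Fin nn) : mnr F l m i j ∈ mnrIdeal F :=
  Ideal.subset_span ⟨(l, m, i, j), rfl⟩

lemma Pmat_expand (l i : Fin nn) :
    Pmat F l i = ∑ a, Pmat F l a * Pmat F a i := by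
  unfold Pmat
  conv_lhs => rw [F.expand (F.e i)]
  rw [eps_sumS]
  refine Finset.sum_congr rfl fun a _ => ?_
  ring

lemma half_smul (s : A) : algebraMap ℝ A (1/2) * (s + s) = s := by
  have h : ((2:A)) = algebraMap ℝ A 2 := (map_ofNat _ 2).symm
  have h2 : algebraMap ℝ A (1/2) * (2:A) = 1 := by
    rw [h, ← map_mul]
    norm_num
  calc algebraMap ℝ A (1/2) * (s + s) = (algebraMap ℝ A (1/2) * 2) * s := by ring
    _ = s := by rw [h2, one_mul]

lemma mnr_sq (l m i j : Fin nn) :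
    mnr F l m i j + mnr F l m i j = ∑ a, ∑ b, mnr F l m a b * mnr F a b i j := by
  have key : ∀ a : Fin nn, ∑ b, mnr F l m a b * mnr F a b i j
      = (Pmat F l a * Pmat F a i) * (∑ b, Pmat F m b * Pmat F b j)
        - (Pmat F l a * Pmat F a j) * (∑ b, Pmat F m b * Pmat F b i)
        - (Pmat F m a * Pmat F a i) * (∑ b, Pmat F l b * Pmat F b j)
        + (Pmat F m a * Pmat F a j) * (∑ b, Pmat F l b * Pmat F b i) := by
    intro a
    rw [Finset.mul_sum, Finset.mul_sum, Finset.mul_sum, Finset.mul_sum,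
      ← Finset.sum_sub_distrib, ← Finset.sum_sub_distrib, ← Finset.sum_add_distrib]
    refine Finset.sum_congr rfl fun b _ => ?_
    unfold mnr; ring
  have h1 : ∑ a, ∑ b, mnr F l m a b * mnr F a b i j
      = ∑ a, ((Pmat F l a * Pmat F a i) * Pmat F m j
            - (Pmat F l a * Pmat F a j) * Pmat F m i
            - (Pmat F m a * Pmat F a i) * Pmat F l j
            + (Pmat F m a * Pmat F a j) * Pmat F l i) := by
    refine Finset.sum_congr rfl fun a _ => ?_
    rw [key a, ← Pmat_expand F m j, ← Pmat_expand F m i, ← Pmat_expand F l j,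
      ← Pmat_expand F l i]
  rw [h1, Finset.sum_add_distrib, Finset.sum_sub_distrib, Finset.sum_sub_distrib,
    ← Finset.sum_mul, ← Finset.sum_mul, ← Finset.sum_mul, ← Finset.sum_mul,
    ← Pmat_expand, ← Pmat_expand, ← Pmat_expand, ← Pmat_expand]
  unfold mnr; ring

lemma mnrIdeal_le_sq : mnrIdeal F ≤ mnrIdeal F * mnrIdeal F := by
  unfold mnrIdeal
  rw [Ideal.span_le]
  rintro x ⟨⟨l, m, i, j⟩, rfl⟩
  have hsq := mnr_sq F l m i j
  have hx : mnr F l m i j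
      = algebraMap ℝ A (1/2) * (∑ a, ∑ b, mnr F l m a b * mnr F a b i j) := by
    rw [← hsq, half_smul]
  simp only
  rw [hx]
  refine SetLike.mem_coe.mpr ?_
  refine Ideal.mul_mem_left _ _ (Ideal.sum_mem _ fun a _ => Ideal.sum_mem _ fun b _ => ?_)
  exact Ideal.mul_mem_mul (Ideal.subset_span ⟨(l, m, a, b), rfl⟩)
    (Ideal.subset_span ⟨(a, b, i, j), rfl⟩)

lemma ric_mem (j k : Fin nn) :
    ricci F C (F.e j) (F.e k) ∈ mnrIdeal F := by
  classical
  have hcurv : ∀ i : Fin nn, F.ε i (curv C (F.e i) (F.e j) (F.e k))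
      = ∑ l, ∑ m, (F.ε l (F.e i) * F.ε m (F.e j))
          * F.ε i (curv C (F.e l) (F.e m) (F.e k)) := by
    intro i
    conv_lhs => rw [F.expand (F.e i)]
    rw [curv_sum_left, eps_sumS]
    refine Finset.sum_congr rfl fun l _ => ?_
    conv_lhs => rw [F.expand (F.e j)]
    rw [curv_sum_mid, eps_sumS, Finset.mul_sum]
    refine Finset.sum_congr rfl fun m _ => ?_
    ring
  have hric3 : ricci F C (F.e j) (F.e k)
      = ∑ i, ∑ l, ∑ m, (F.ε l (F.e i) * F.ε m (F.e j))
          * F.ε i (curv C (F.e l) (F.e m) (F.e k)) := by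
    unfold ricci
    exact Finset.sum_congr rfl fun i _ => hcurv i
  rw [hric3]
  refine Ideal.sum_mem _ fun i _ => ?_
  have hanti : ∀ l m : Fin nn, F.ε i (curv C (F.e m) (F.e l) (F.e k))
      = - F.ε i (curv C (F.e l) (F.e m) (F.e k)) := by
    intro l m
    rw [curv_skew C (F.e m) (F.e l) (F.e k)]
    exact eps_neg F i _
  have hflip : (∑ l, ∑ m, (F.ε l (F.e i) * F.ε m (F.e j))
          * F.ε i (curv C (F.e l) (F.e m) (F.e k)))
      = ∑ l, ∑ m, (F.ε m (F.e i) * F.ε l (F.e j))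
          * (- F.ε i (curv C (F.e l) (F.e m) (F.e k))) := by
    rw [Finset.sum_comm]
    refine Finset.sum_congr rfl fun a _ => Finset.sum_congr rfl fun b _ => ?_
    rw [hanti a b]
  have h2S : (∑ l, ∑ m, (F.ε l (F.e i) * F.ε m (F.e j))
          * F.ε i (curv C (F.e l) (F.e m) (F.e k)))
        + (∑ l, ∑ m, (F.ε l (F.e i) * F.ε m (F.e j))
          * F.ε i (curv C (F.e l) (F.e m) (F.e k)))
      = ∑ l, ∑ m, mnr F l m i j * F.ε i (curv C (F.e l) (F.e m) (F.e k)) := by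
    nth_rewrite 2 [hflip]
    rw [← Finset.sum_add_distrib]
    refine Finset.sum_congr rfl fun l _ => ?_
    rw [← Finset.sum_add_distrib]
    refine Finset.sum_congr rfl fun m _ => ?_
    unfold mnr Pmat; ring
  have hhalfS : (∑ l, ∑ m, (F.ε l (F.e i) * F.ε m (F.e j))
          * F.ε i (curv C (F.e l) (F.e m) (F.e k)))
      = algebraMap ℝ A (1/2)
        * (∑ l, ∑ m, mnr F l m i j * F.ε i (curv C (F.e l) (F.e m) (F.e k))) := by
    rw [← h2S, half_smul]
  rw [hhalfS]
  refine Ideal.mul_mem_left _ _ (Ideal.sum_mem _ fun l _ => Ideal.sum_mem _ fun m _ => ?_)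
  exact Ideal.mul_mem_right _ _ (mnr_mem F l m i j)

lemma mnrIdeal_fg : (mnrIdeal F).FG := by
  unfold mnrIdeal
  exact Submodule.fg_span (Set.finite_range _)

end Stmt16Aux


/-- if `Ric = (n−1) g(S·,·)` is symmetric, `∇Ric` is totally
symmetric and `S = λ·id` for a function `λ`, then `λ` is constant. -/
theorem stmt16 {n : ℕ} (hn : 2 ≤ n) (gm : Metric A) (C : Conn A)
    (F : Frame A n) (hstat : IsStatistical gm C)
    (S : VF A → VF A) (lam : A)
    (hS : ∀ X Y, ricci F C X Y = ((n : A) - 1) * gm.g (S X) Y)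
    (hRicSymm : ∀ X Y, ricci F C X Y = ricci F C Y X)
    (hDRic : TotSym3 (cov2 C (ricci F C)))
    (hlam : ∀ Y, S Y = lam • Y) :
    ∀ X : VF A, X lam = 0 := by
  classical
  intro X
  -- scalar helpers
  have hca : algebraMap ℝ A ((n:ℝ) - 1) = (n:A) - 1 := by
    rw [map_sub, map_one, map_natCast]
  have hne : ((n:ℝ) - 1) ≠ 0 := by
    have h2 : (2:ℝ) ≤ (n:ℝ) := by exact_mod_cast hn
    linarith
  have hcancel : ∀ a b : A, ((n:A) - 1) * a = ((n:A) - 1) * b → a = b := by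
    intro a b h
    have h1 : algebraMap ℝ A (((n:ℝ) - 1)⁻¹) * ((n:A) - 1) = 1 := by
      rw [← hca, ← map_mul, inv_mul_cancel₀ hne, map_one]
    calc a = (algebraMap ℝ A (((n:ℝ) - 1)⁻¹) * ((n:A) - 1)) * a := by rw [h1, one_mul]
      _ = algebraMap ℝ A (((n:ℝ) - 1)⁻¹) * (((n:A) - 1) * a) := by ring
      _ = algebraMap ℝ A (((n:ℝ) - 1)⁻¹) * (((n:A) - 1) * b) := by rw [h]
      _ = (algebraMap ℝ A (((n:ℝ) - 1)⁻¹) * ((n:A) - 1)) * b := by ring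
      _ = b := by rw [h1, one_mul]
  have hXc : ∀ W : VF A, W ((n:A) - 1) = 0 := by
    intro W
    rw [← hca]
    exact Derivation.map_algebraMap W _
  -- Ricci in terms of lam and g
  have hric : ∀ Y Z : VF A, ricci F C Y Z = ((n:A) - 1) * (lam * gm.g Y Z) := by
    intro Y Z
    rw [hS, hlam, gm.smul_left]
  -- covariant derivative of Ricci
  have hcov2 : ∀ W Y Z : VF A, cov2 C (ricci F C) W Y Z
      = ((n:A) - 1) * (W lam * gm.g Y Z) + ((n:A) - 1) * (lam * cubic gm C W Y Z) := by
    intro W Y Z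
    unfold cov2 cubic
    simp only [hric]
    rw [Derivation.leibniz, Derivation.leibniz, hXc W]
    simp only [smul_eq_mul]
    ring
  -- the key symmetry (I)
  have hI : ∀ W Y Z : VF A, W lam * gm.g Y Z = Y lam * gm.g W Z := by
    intro W Y Z
    have h := hDRic.1 W Y Z
    rw [hcov2, hcov2, hstat.2.1 W Y Z] at h
    have h2 := add_right_cancel h
    exact hcancel _ _ h2
  -- vector-field form of (I)
  have hIvv : ∀ W Y : VF A, W lam • Y = Y lam • W := by
    intro W Y
    have hz : W lam • Y - Y lam • W = 0 := by
      apply gm.nondeg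
      intro Z
      rw [g_sub_left gm, gm.smul_left, gm.smul_left, hI W Y Z, sub_self]
    exact sub_eq_zero.mp hz
  -- coordinate swap
  have hswap : ∀ (W Y : VF A) (i : Fin n), W lam * F.ε i Y = Y lam * F.ε i W := by
    intro W Y i
    have h := congrArg (F.ε i) (hIvv W Y)
    rwa [F.ε_smul, F.ε_smul] at h
  -- f kills products of ε-coordinates symmetrically
  have hminor : ∀ (W Y Z : VF A) (i j : Fin n),
      W lam * (F.ε i Y * F.ε j Z) = W lam * (F.ε i Z * F.ε j Y) := by
    intro W Y Z i j
    calc W lam * (F.ε i Y * F.ε j Z) = (W lam * F.ε i Y) * F.ε j Z := by ring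
      _ = (Y lam * F.ε i W) * F.ε j Z := by rw [hswap W Y i]
      _ = (Y lam * F.ε j Z) * F.ε i W := by ring
      _ = (Z lam * F.ε j Y) * F.ε i W := by rw [hswap Y Z j]
      _ = (Z lam * F.ε i W) * F.ε j Y := by ring
      _ = (W lam * F.ε i Z) * F.ε j Y := by rw [hswap Z W i]
      _ = W lam * (F.ε i Z * F.ε j Y) := by ring
  -- f kills the minors ideal
  have hkill : ∀ (W : VF A) (x : A), x ∈ mnrIdeal F → W lam * x = 0 := by
    intro W x hx
    induction hx using Submodule.span_induction with
    | mem y hy =>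
        obtain ⟨⟨l, m, i, j⟩, rfl⟩ := hy
        have h7 := hminor W (F.e i) (F.e j) l m
        unfold mnr Pmat
        simp only
        linear_combination h7
    | zero => simp
    | add y z hy hz ihy ihz => rw [mul_add, ihy, ihz, add_zero]
    | smul a y hy ih => rw [smul_eq_mul, mul_left_comm, ih, mul_zero]
  -- Nakayama: an almost-idempotent generator for the minors ideal
  obtain ⟨r, hr1, hr0⟩ :=
    Submodule.exists_sub_one_mem_and_smul_eq_zero_of_fg_of_le_smul
      (mnrIdeal F) (mnrIdeal F) (mnrIdeal_fg F)
      (by rw [Ideal.smul_eq_mul]; exact mnrIdeal_le_sq F)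
  have hrI : (1:A) - r ∈ mnrIdeal F := by
    have h := (mnrIdeal F).neg_mem hr1
    simpa [neg_sub] using h
  have hfix : ∀ x ∈ mnrIdeal F, ((1:A) - r) * x = x := by
    intro x hx
    have h0 : r * x = 0 := by simpa [smul_eq_mul] using hr0 x hx
    rw [sub_mul, one_mul, h0, sub_zero]
  have hidem : ((1:A) - r) * ((1:A) - r) = (1:A) - r := hfix _ hrI
  -- derivations kill the idempotent
  have hXrho : ∀ W : VF A, W ((1:A) - r) = 0 := by
    intro W
    have h1 : W (((1:A) - r) * ((1:A) - r)) = W ((1:A) - r) := by rw [hidem]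
    simp only [Derivation.leibniz, smul_eq_mul] at h1
    linear_combination (2*((1:A) - r) - 1) * h1 + (-4 * (W ((1:A) - r))) * hidem
  have hXr : ∀ W : VF A, W r = 0 := by
    intro W
    have h5 : W (((1:A) - r) + r) = W ((1:A) - r) + W r := map_add W _ _
    rw [sub_add_cancel, Derivation.map_one_eq_zero, hXrho W, zero_add] at h5
    exact h5.symm
  -- r * lam annihilates the metric
  have htg : ∀ j k : Fin n, (r * lam) * gm.g (F.e j) (F.e k) = 0 := by
    intro j k
    have hmem : ((n:A) - 1) * (lam * gm.g (F.e j) (F.e k)) ∈ mnrIdeal F := by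
      rw [← hric]
      exact ric_mem C F j k
    have h0 : r * (((n:A) - 1) * (lam * gm.g (F.e j) (F.e k))) = 0 := by
      simpa [smul_eq_mul] using hr0 _ hmem
    apply hcancel _ 0
    rw [mul_zero]
    linear_combination h0
  have htgen : ∀ Y Z : VF A, (r * lam) * gm.g Y Z = 0 := by
    intro Y Z
    rw [g_expand gm F Y Z, Finset.mul_sum]
    refine Finset.sum_eq_zero fun j _ => ?_
    rw [Finset.mul_sum]
    refine Finset.sum_eq_zero fun k _ => ?_
    rw [show (r * lam) * (F.ε j Y * (F.ε k Z * gm.g (F.e j) (F.e k)))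
        = (F.ε j Y * F.ε k Z) * ((r * lam) * gm.g (F.e j) (F.e k)) by ring,
      htg j k, mul_zero]
  have htY : ∀ Y : VF A, (r * lam) • Y = 0 := by
    intro Y
    apply gm.nondeg
    intro Z
    rw [gm.smul_left, htgen]
  have htapp : ∀ (Y : VF A) (b : A), (r * lam) * Y b = 0 := by
    intro Y b
    have h := congrArg (fun (D : VF A) => D b) (htY Y)
    simpa [vf_smul_apply] using h
  -- differentiate: (r * X lam) annihilates all derivative values
  have hu : ∀ (b : A) (Y : VF A), (r * X lam) * Y b = 0 := by
    intro b Y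
    have h0 : X ((r * lam) * Y b) = 0 := by rw [htapp Y b, map_zero]
    rw [Derivation.leibniz, smul_eq_mul, smul_eq_mul] at h0
    have h1 : (r * lam) * X (Y b) = 0 := htapp X (Y b)
    have h2 : X (r * lam) = r * X lam := by
      rw [Derivation.leibniz, smul_eq_mul, smul_eq_mul, hXr X, mul_zero, add_zero]
    linear_combination h0 - h1 - (Y b) * h2
  -- the trace identity  f(X) * T = f(X)
  have hT : X lam * (∑ i, F.ε i (F.e i)) = X lam := by
    rw [Finset.mul_sum]
    rw [Finset.sum_congr rfl fun i (_ : i ∈ Finset.univ) =>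
      (by rw [hswap X (F.e i) i]; ring :
        X lam * F.ε i (F.e i) = F.ε i X * (F.e i) lam)]
    conv_rhs => rw [F.expand X]
    rw [vf_sum_apply]
    refine Finset.sum_congr rfl fun i _ => ?_
    rw [vf_smul_apply]
  -- (r * X lam) * T = 0
  have huT : (r * X lam) * (∑ i, F.ε i (F.e i)) = 0 := by
    rw [Finset.mul_sum]
    refine Finset.sum_eq_zero fun i _ => ?_
    have hu0 : (r * X lam) • (F.e i) = 0 := by
      ext b
      rw [vf_smul_apply, hu b (F.e i)]
      simp
    have h := congrArg (F.ε i) hu0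
    rwa [F.ε_smul, eps_zero] at h
  have h1 : r * X lam = 0 := by
    calc r * X lam = r * (X lam * (∑ i, F.ε i (F.e i))) := by rw [hT]
      _ = (r * X lam) * (∑ i, F.ε i (F.e i)) := by ring
      _ = 0 := huT
  have h2 : X lam * ((1:A) - r) = 0 := hkill X _ hrI
  linear_combination h1 + h2

end StatMfd
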